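/- For an interdependent n-person game under the learning dynamics, for every all-discontent state d ∈ D and every z^0 ∈ C^0, the resistance between the recurrence class D and the singleton recurrence class {z^0} satisfies r_{d z^0} = Σ_{i∈N} (1 − ū_i(z^0)). -/

import Mathlib

open scoped Classical
open Filter Topology

namespace Paper

/-- Mood of an agent: content or discontent. -/
inductive Mood where
  | content : Mood
  | discontent : Mood
deriving DecidableEq

/-- The internal state of a single agent: a baseline action, a baseline utility and a mood. -/
structure AgentState (α : Type*) where
  act : α
  util : ℝ
  mood : Mood

variable {n : ℕ} {A : Fin n → Type*} {W : Type*}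

/-- Joint state of all agents. -/
abbrev JState (A : Fin n → Type*) := ∀ i, AgentState (A i)

/-- The baseline (joint) action profile of a joint state. -/
def prof (z : JState A) : ∀ j, A j := fun j => (z j).act

def allContent (z : JState A) : Prop := ∀ i, (z i).mood = Mood.content

def allDiscontent (z : JState A) : Prop := ∀ i, (z i).mood = Mood.discontent

variable [∀ i, Fintype (A i)] [Fintype W]

/-- The network welfare of an action profile under a disturbance. -/
def welfare (U : ∀ i : Fin n, (∀ j, A j) → W → ℝ) (a : ∀ j, A j) (w : W) : ℝ :=
  ∑ i, U i a w

/-- ρ : the smallest real `r` such that `|U i a w₁ − U i a w₂| ≤ r` for all `i`, `a`, `w₁`, `w₂`. -/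
noncomputable def rho (U : ∀ i : Fin n, (∀ j, A j) → W → ℝ) : ℝ :=
  sInf {r : ℝ | ∀ (i : Fin n) (a : ∀ j, A j) (w₁ w₂ : W), |U i a w₁ - U i a w₂| ≤ r}

/-- Interdependence of the n-person game subject to disturbances. -/
def Interdependent (U : ∀ i : Fin n, (∀ j, A j) → W → ℝ) : Prop :=
  ∀ (a : ∀ j, A j) (w : W) (J : Set (Fin n)), J.Nonempty → J ≠ Set.univ →
    ∃ i ∉ J, ∃ a' : ∀ j, A j, (∀ j ∉ J, a' j = a j) ∧
      ∃ w' : W, |U i a' w' - U i a w| > rho U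

/-- Probability that agent `i` in state `zi` plays action `ai`, with experimentation
rate `ε` and constant `c`: a content agent plays its baseline action with probability
`1 − ε^c` and each other action with probability `ε^c/(|A i| − 1)`; a discontent agent
plays each action with probability `1/|A i|`. -/
noncomputable def actProb (c ε : ℝ) {i : Fin n} (zi : AgentState (A i)) (ai : A i) : ℝ :=
  match zi.mood with
  | Mood.content =>
      if ai = zi.act then 1 - ε ^ c else ε ^ c / ((Fintype.card (A i) : ℝ) - 1)
  | Mood.discontent => 1 / (Fintype.card (A i) : ℝ)

/-- Probability that agent `i` moves from state `zi` to state `zi'` after playing action `ai`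
and receiving payoff `u`: a content agent that played its baseline action and received a
payoff within `ρ` of its baseline keeps its state; otherwise the state becomes
`[ai, u, content]` with probability `ε^(1−u)` and `[ai, u, discontent]` with
probability `1 − ε^(1−u)`. -/
noncomputable def updProb (ρ ε : ℝ) {i : Fin n} (zi zi' : AgentState (A i))
    (ai : A i) (u : ℝ) : ℝ :=
  if zi.mood = Mood.content ∧ ai = zi.act ∧ |u - zi.util| ≤ ρ then
    (if zi' = zi then 1 else 0)
  else if zi' = ⟨ai, u, Mood.content⟩ then ε ^ (1 - u)
  else if zi' = ⟨ai, u, Mood.discontent⟩ then 1 - ε ^ (1 - u)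
  else 0

/-- One-step transition probability `P^ε z z'` of the joint learning dynamics, averaging
over the joint action chosen and the i.i.d. disturbance with law `Prw`.
At `ε = 0` this is the unperturbed chain `P^0` (the entrywise limit as `ε → 0`). -/
noncomputable def P (U : ∀ i : Fin n, (∀ j, A j) → W → ℝ) (Prw : W → ℝ) (c : ℝ)
    (ε : ℝ) (z z' : JState A) : ℝ :=
  ∑ a : ∀ j, A j, ∑ w : W,
    (∏ i, actProb c ε (z i) (a i)) * Prw w *
      (∏ i, updProb (rho U) ε (z i) (z' i) (a i) (U i a w))

variable (U : ∀ i : Fin n, (∀ j, A j) → W → ℝ) (Prw : W → ℝ) (c : ℝ)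

/-- One-step transition with positive probability under the perturbed dynamics. -/
def stepPos (x y : JState A) : Prop := ∃ ε ∈ Set.Ioo (0:ℝ) 1, 0 < P U Prw c ε x y

/-- A joint state is valid if each baseline utility lies in the range of the
corresponding utility function. -/
def ValidState (z : JState A) : Prop := ∀ i, ∃ (a : ∀ j, A j) (w : W), U i a w = (z i).util

/-- The joint state space `Z`: joint states reachable with positive probability (in some
positive number of steps) from a joint state in which all agents are discontent. -/
def SSpace : Set (JState A) :=
  {z | ∃ z₀ : JState A, ValidState U z₀ ∧ allDiscontent z₀ ∧
        Relation.TransGen (stepPos U Prw c) z₀ z}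

/-- The set `D` of all-discontent joint states in `Z`. -/
def Dset : Set (JState A) := {z | z ∈ SSpace U Prw c ∧ allDiscontent z}

/-- The set `B i`: states whose baseline utility for agent `i` is aligned with the baseline
action profile for some disturbance and within `ρ` of it for every disturbance. -/
def Bset (i : Fin n) : Set (JState A) :=
  {z | z ∈ SSpace U Prw c ∧ (∃ w : W, (z i).util = U i (prof z) w) ∧
       ∀ w' : W, |(z i).util - U i (prof z) w'| ≤ rho U}

/-- The content classes `C^m`. -/
def Cm : ℕ → Set (JState A)
  | 0 => {z | z ∈ SSpace U Prw c ∧ allContent z ∧ ∀ i, z ∈ Bset U Prw c i}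
  | (m+1) => {z | z ∈ SSpace U Prw c ∧ allContent z ∧
      ∃ J : Fin (m+2) → Finset (Fin n),
        (∀ k, (J k).Nonempty) ∧
        (∀ k l, k ≠ l → Disjoint (J k) (J l)) ∧
        (Finset.univ.biUnion J = Finset.univ) ∧
        (∀ j ∈ J (Fin.last (m+1)), z ∈ Bset U Prw c j) ∧
        ∃ z' ∈ Cm m, ∀ j ∉ J (Fin.last (m+1)),
          z j = z' j ∧ ∀ w' : W, |(z' j).util - U j (prof z) w'| ≤ rho U}

/-- One-step transition with positive probability under the unperturbed chain `P^0`. -/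
def step0 (x y : JState A) : Prop := 0 < P U Prw c 0 x y

/-- Reachability (in zero or more steps) under the unperturbed chain `P^0`. -/
def Reach0 : JState A → JState A → Prop := Relation.ReflTransGen (step0 U Prw c)

/-- A state is recurrent for `P^0` if every state reachable from it can reach it back. -/
def Recurrent0 (x : JState A) : Prop := ∀ y, Reach0 U Prw c x y → Reach0 U Prw c y x

/-- Recurrence classes of the unperturbed chain `P^0` on `Z`. -/
def RecClass (Cl : Set (JState A)) : Prop :=
  ∃ x ∈ SSpace U Prw c, Recurrent0 U Prw c x ∧
    Cl = {y | y ∈ SSpace U Prw c ∧ Reach0 U Prw c x y}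

/- Generic Markov chain notions. -/

/-- `k`-step reachability (through positive-probability transitions) for a kernel `Q`. -/
def MReachN {X : Type*} (Q : X → X → ℝ) : ℕ → X → X → Prop
  | 0 => fun x y => x = y
  | (k+1) => fun x y => ∃ z, 0 < Q x z ∧ MReachN Q k z y

/-- Irreducibility of a kernel on a set of states. -/
def MIrreducibleOn {X : Type*} (Q : X → X → ℝ) (S : Set X) : Prop :=
  ∀ x ∈ S, ∀ y ∈ S, ∃ k, 0 < k ∧ MReachN Q k x y

/-- Aperiodicity of a kernel on a set of states: the return times to each state
have greatest common divisor 1. -/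
def MAperiodicOn {X : Type*} (Q : X → X → ℝ) (S : Set X) : Prop :=
  ∀ x ∈ S, ∀ d : ℕ, (∀ k, 0 < k → MReachN Q k x x → d ∣ k) → d = 1

/-- Reachability for a kernel `Q`. -/
def MReach {X : Type*} (Q : X → X → ℝ) : X → X → Prop :=
  Relation.ReflTransGen (fun x y => 0 < Q x y)

/-- Recurrent state of a kernel. -/
def MRecurrent {X : Type*} (Q : X → X → ℝ) (x : X) : Prop :=
  ∀ y, MReach Q x y → MReach Q y x

/-- Recurrence class of a kernel. -/
def MRecClass {X : Type*} (Q : X → X → ℝ) (Cl : Set X) : Prop :=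
  ∃ x, MRecurrent Q x ∧ Cl = {y | MReach Q x y}

/-- Stationary distribution of a kernel on a finite type. -/
def MStationary {X : Type*} [Fintype X] (Q : X → X → ℝ) (μ : X → ℝ) : Prop :=
  (∀ x, 0 ≤ μ x) ∧ (∑ x, μ x) = 1 ∧ ∀ y, (∑ x, μ x * Q x y) = μ y

/-- Stationary distribution of a kernel supported on a set `S`. -/
def IsStationaryOn {X : Type*} (Q : X → X → ℝ) (S : Set X) (μ : X → ℝ) : Prop :=
  (∀ x, 0 ≤ μ x) ∧ (∀ x ∉ S, μ x = 0) ∧ (∑ᶠ x ∈ S, μ x) = 1 ∧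
    ∀ y ∈ S, (∑ᶠ x ∈ S, μ x * Q x y) = μ y

/-- `r` is the resistance of the transition `x → y` for the family of kernels `Pf ε`:
`0 < lim_{ε→0⁺} ε^{−r} Pf ε x y < ∞`. -/
def FamTransRes {X : Type*} (Pf : ℝ → X → X → ℝ) (x y : X) (r : ℝ) : Prop :=
  ∃ L : ℝ, 0 < L ∧
    Tendsto (fun ε : ℝ => Pf ε x y / ε ^ r) (𝓝[>] (0:ℝ)) (𝓝 L)

/-- `PathRes R x y r`: there is a path (of one or more transitions) from `x` to `y`
whose transitions have resistances (in the sense of `R`) summing to `r`. -/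
inductive PathRes {X : Type*} (R : X → X → ℝ → Prop) : X → X → ℝ → Prop
  | single {x y : X} {r : ℝ} : R x y r → PathRes R x y r
  | cons {x y z : X} {r s : ℝ} : R x y r → PathRes R y z s → PathRes R x z (r + s)

/-- `ClassResIs R S T r` : `r` is the minimum path resistance over paths from a state of
`S` to a state of `T`. -/
def ClassResIs {X : Type*} (R : X → X → ℝ → Prop) (S T : Set X) (r : ℝ) : Prop :=
  (∃ x ∈ S, ∃ y ∈ T, PathRes R x y r) ∧
    ∀ x ∈ S, ∀ y ∈ T, ∀ r', PathRes R x y r' → r ≤ r'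

/-- Resistance of a transition for the learning dynamics. -/
def TransRes (x y : JState A) (r : ℝ) : Prop := FamTransRes (P U Prw c) x y r

/- Trees over recurrence classes and stochastic potential. -/

/-- An `ℓ`-tree over the collection `RC` of recurrence classes, rooted at `root`, encoded by a
parent map: every non-root class has exactly one outgoing edge (to its parent), and following
parents from any class leads to the root. -/
def IsLTree {X : Type*} (RC : Set (Set X)) (root : Set X) (par : Set X → Set X) : Prop :=
  root ∈ RC ∧ par root = root ∧ (∀ Cl ∈ RC, par Cl ∈ RC) ∧
    ∀ Cl ∈ RC, ∃ k : ℕ, par^[k] Cl = root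

/-- Total resistance of a tree: sum over non-root classes of the resistance of the
edge to the parent, where `rfun C₁ C₂` is the resistance between classes `C₁` and `C₂`. -/
noncomputable def treeRes {X : Type*} (RC : Set (Set X)) (rfun : Set X → Set X → ℝ)
    (root : Set X) (par : Set X → Set X) : ℝ :=
  ∑ᶠ Cl ∈ {Cl | Cl ∈ RC ∧ Cl ≠ root}, rfun Cl (par Cl)

/-- Stochastic potential of the recurrence class `root`: minimum total resistance over
trees rooted at `root`. -/
noncomputable def stochPot {X : Type*} (RC : Set (Set X)) (rfun : Set X → Set X → ℝ)
    (root : Set X) : ℝ :=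
  sInf {s | ∃ par, IsLTree RC root par ∧ s = treeRes RC rfun root par}

/- Trees over recurrence classes indexed by `Fin L`. -/

/-- An `ℓ`-tree on vertex set `Fin L` rooted at `root`, encoded by a parent map. -/
def IsLTreeFin {L : ℕ} (root : Fin L) (par : Fin L → Fin L) : Prop :=
  par root = root ∧ ∀ v, ∃ k : ℕ, par^[k] v = root

/-- Total resistance of a tree on `Fin L`. -/
noncomputable def treeResFin {L : ℕ} (r : Fin L → Fin L → ℝ) (root : Fin L)
    (par : Fin L → Fin L) : ℝ :=
  ∑ v ∈ Finset.univ.filter (fun v => v ≠ root), r v (par v)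

/-- Stochastic potential of the recurrence class indexed by `root`. -/
noncomputable def stochPotFin {L : ℕ} (r : Fin L → Fin L → ℝ) (root : Fin L) : ℝ :=
  sInf {s | ∃ par, IsLTreeFin root par ∧ s = treeResFin r root par}

end Paper

namespace Paper
set_option linter.unnecessarySimpa false
set_option linter.unusedSectionVars false
set_option linter.unusedVariables false

section Aux
def Fac (f : ℝ → ℝ) (e c : ℝ) : Prop :=
  Tendsto (fun ε : ℝ => f ε / ε ^ e) (𝓝[>] (0:ℝ)) (𝓝 c)

lemma mem_nhdsGT_Ioo : Set.Ioo (0:ℝ) 1 ∈ 𝓝[>] (0:ℝ) :=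
  Ioo_mem_nhdsGT_of_mem (by constructor <;> norm_num)

lemma fac_congr {f g : ℝ → ℝ} {e c : ℝ} (h : ∀ ε ∈ Set.Ioo (0:ℝ) 1, f ε = g ε)
    (hf : Fac f e c) : Fac g e c := by
  refine hf.congr' ?_
  filter_upwards [mem_nhdsGT_Ioo] with ε hε
  rw [h ε hε]

lemma fac_unique {f : ℝ → ℝ} {e c c' : ℝ} (h : Fac f e c) (h' : Fac f e c') : c = c' :=
  tendsto_nhds_unique h h'

lemma fac_const (k : ℝ) : Fac (fun _ => k) 0 k := by
  have : (fun ε : ℝ => k / ε ^ (0:ℝ)) = fun _ => k := by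
    funext ε; rw [Real.rpow_zero, div_one]
  unfold Fac; rw [this]; exact tendsto_const_nhds

lemma fac_zero_fun (e : ℝ) : Fac (fun _ => 0) e 0 := by
  unfold Fac
  simpa using tendsto_const_nhds (α := ℝ) (f := 𝓝[>] (0:ℝ)) (a := (0:ℝ))

lemma tendsto_rpow_zero {p : ℝ} (hp : 0 < p) :
    Tendsto (fun ε : ℝ => ε ^ p) (𝓝[>] (0:ℝ)) (𝓝 0) := by
  have h := (Real.continuousAt_rpow_const 0 p (Or.inr hp.le)).tendsto
  rw [Real.zero_rpow hp.ne'] at h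
  exact h.mono_left nhdsWithin_le_nhds

lemma fac_rpow (p : ℝ) : Fac (fun ε => ε ^ p) p 1 := by
  unfold Fac
  have : ∀ ε ∈ Set.Ioo (0:ℝ) 1, ε ^ p / ε ^ p = (1:ℝ) := by
    intro ε hε
    exact div_self (ne_of_gt (Real.rpow_pos_of_pos hε.1 p))
  refine Tendsto.congr' ?_ tendsto_const_nhds
  filter_upwards [mem_nhdsGT_Ioo] with ε hε
  exact (this ε hε).symm

lemma fac_one_sub_rpow {p : ℝ} (hp : 0 < p) : Fac (fun ε => 1 - ε ^ p) 0 1 := by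
  unfold Fac
  have h : Tendsto (fun ε : ℝ => 1 - ε ^ p) (𝓝[>] (0:ℝ)) (𝓝 1) := by
    have := (tendsto_const_nhds (x := (1:ℝ)) (f := 𝓝[>] (0:ℝ))).sub (tendsto_rpow_zero hp)
    simpa using this
  refine Tendsto.congr' ?_ h
  filter_upwards [mem_nhdsGT_Ioo] with ε hε
  rw [Real.rpow_zero, div_one]

lemma fac_mul {f g : ℝ → ℝ} {e e' c c' : ℝ} (hf : Fac f e c) (hg : Fac g e' c') :
    Fac (fun ε => f ε * g ε) (e + e') (c * c') := by
  unfold Fac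
  refine Tendsto.congr' ?_ (hf.mul hg)
  filter_upwards [mem_nhdsGT_Ioo] with ε hε
  rw [Real.rpow_add hε.1]
  field_simp

lemma fac_raise {f : ℝ → ℝ} {e c e' : ℝ} (hf : Fac f e c) (h : e' < e) : Fac f e' 0 := by
  unfold Fac
  have heq : ∀ ε ∈ Set.Ioo (0:ℝ) 1, f ε / ε ^ e' = (f ε / ε ^ e) * ε ^ (e - e') := by
    intro ε hε
    rw [Real.rpow_sub hε.1]
    have h1 : ε ^ e ≠ 0 := ne_of_gt (Real.rpow_pos_of_pos hε.1 e)
    have h2 : ε ^ e' ≠ 0 := ne_of_gt (Real.rpow_pos_of_pos hε.1 e')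
    field_simp
  have ht : Tendsto (fun ε : ℝ => (f ε / ε ^ e) * ε ^ (e - e')) (𝓝[>] (0:ℝ)) (𝓝 0) := by
    have := hf.mul (tendsto_rpow_zero (sub_pos.mpr h))
    simpa using this
  refine Tendsto.congr' ?_ ht
  filter_upwards [mem_nhdsGT_Ioo] with ε hε
  exact (heq ε hε).symm

lemma fac_le_raise {f : ℝ → ℝ} {e c e' : ℝ} (hf : Fac f e c) (hc : 0 ≤ c) (h : e' ≤ e) :
    ∃ c', 0 ≤ c' ∧ Fac f e' c' := by
  rcases eq_or_lt_of_le h with h | h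
  · exact ⟨c, hc, h ▸ hf⟩
  · exact ⟨0, le_refl _, fac_raise hf h⟩

lemma fac_prod {ι : Type*} {f : ι → ℝ → ℝ} {e c : ι → ℝ} (s : Finset ι)
    (h : ∀ i ∈ s, Fac (f i) (e i) (c i)) :
    Fac (fun ε => ∏ i ∈ s, f i ε) (∑ i ∈ s, e i) (∏ i ∈ s, c i) := by
  classical
  induction s using Finset.induction_on with
  | empty => simpa using fac_const 1
  | insert a s hx ih =>
      rw [Finset.sum_insert hx, Finset.prod_insert hx]
      have hfe : (fun ε => ∏ i ∈ insert a s, f i ε) = fun ε => f a ε * ∏ i ∈ s, f i ε := by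
        funext ε; rw [Finset.prod_insert hx]
      rw [hfe]
      exact fac_mul (h a (Finset.mem_insert_self a s))
        (ih fun i hi => h i (Finset.mem_insert_of_mem hi))

lemma fac_sum {ι : Type*} {f : ι → ℝ → ℝ} {r : ℝ} {c : ι → ℝ} (s : Finset ι)
    (h : ∀ i ∈ s, Fac (f i) r (c i)) :
    Fac (fun ε => ∑ i ∈ s, f i ε) r (∑ i ∈ s, c i) := by
  unfold Fac
  have := tendsto_finset_sum s (fun i hi => h i hi)
  refine Tendsto.congr' ?_ this
  filter_upwards [mem_nhdsGT_Ioo] with ε hε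
  rw [Finset.sum_div]
end Aux

section GameAux
variable {n : ℕ} {A : Fin n → Type*} {W : Type*}
variable [∀ i, Fintype (A i)] [∀ i, Nonempty (A i)] [Fintype W] [Nonempty W]

/- helpers about updProb -/

lemma upd_keep {ρ' ε : ℝ} {i : Fin n} {zi zi' : AgentState (A i)} {ai : A i} {u : ℝ}
    (h1 : zi.mood = Mood.content) (h2 : ai = zi.act) (h3 : |u - zi.util| ≤ ρ')
    (h4 : zi' = zi) : updProb ρ' ε zi zi' ai u = 1 := by
  simp [updProb, h1, h2, h3, h4]

lemma upd_acc {ρ' ε : ℝ} {i : Fin n} {zi zi' : AgentState (A i)} {ai : A i} {u : ℝ}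
    (hm : zi.mood = Mood.discontent) (h : zi' = ⟨ai, u, Mood.content⟩) :
    updProb ρ' ε zi zi' ai u = ε ^ (1 - u) := by
  simp [updProb, hm, h]

lemma upd_rej {ρ' ε : ℝ} {i : Fin n} {zi zi' : AgentState (A i)} {ai : A i} {u : ℝ}
    (hm : zi.mood = Mood.discontent) (h : zi' = ⟨ai, u, Mood.discontent⟩) :
    updProb ρ' ε zi zi' ai u = 1 - ε ^ (1 - u) := by
  simp [updProb, hm, h]

lemma upd_zero_of {ρ' ε : ℝ} {i : Fin n} {zi zi' : AgentState (A i)} {ai : A i} {u : ℝ}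
    (hm : zi.mood = Mood.discontent) (hmc : zi'.mood = Mood.content)
    (h : zi' ≠ ⟨ai, u, Mood.content⟩) : updProb ρ' ε zi zi' ai u = 0 := by
  have h2 : zi' ≠ ⟨ai, u, Mood.discontent⟩ := by
    intro he; rw [he] at hmc; simp at hmc
  simp [updProb, hm, h, h2]

lemma upd_ne_zero_util {ρ' ε : ℝ} {i : Fin n} {zi zi' : AgentState (A i)} {ai : A i} {u : ℝ}
    (h : updProb ρ' ε zi zi' ai u ≠ 0) (hne : zi' ≠ zi) : zi'.util = u := by
  by_cases hk : zi.mood = Mood.content ∧ ai = zi.act ∧ |u - zi.util| ≤ ρ'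
  · exfalso; apply h; simp [updProb, hk, hne]
  · by_cases h1 : zi' = ⟨ai, u, Mood.content⟩
    · rw [h1]
    · by_cases h2 : zi' = ⟨ai, u, Mood.discontent⟩
      · rw [h2]
      · exfalso; apply h; simp [updProb, hk, h1, h2]

lemma upd_mem_Icc {ρ' ε : ℝ} {i : Fin n} {zi zi' : AgentState (A i)} {ai : A i} {u : ℝ}
    (hε : ε ∈ Set.Ioo (0:ℝ) 1) (hu : u < 1) :
    updProb ρ' ε zi zi' ai u ∈ Set.Icc (0:ℝ) 1 := by
  have hp : (0:ℝ) < ε ^ (1 - u) := Real.rpow_pos_of_pos hε.1 _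
  have hl : ε ^ (1 - u) < 1 := Real.rpow_lt_one hε.1.le hε.2 (by linarith)
  unfold updProb
  split
  · split <;> norm_num
  · split
    · exact ⟨hp.le, hl.le⟩
    · split
      · constructor <;> linarith
      · norm_num

lemma upd_le_content {ρ' ε : ℝ} {i : Fin n} {zi zi' : AgentState (A i)} {ai : A i} {u : ℝ}
    (hε : 0 < ε) (hne : zi' ≠ zi) (hmc : zi'.mood = Mood.content) :
    updProb ρ' ε zi zi' ai u ≤ ε ^ (1 - zi'.util) := by
  have hp : (0:ℝ) < ε ^ (1 - zi'.util) := Real.rpow_pos_of_pos hε _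
  by_cases hk : zi.mood = Mood.content ∧ ai = zi.act ∧ |u - zi.util| ≤ ρ'
  · rw [show updProb ρ' ε zi zi' ai u = 0 by simp [updProb, hk, hne]]
    exact hp.le
  · by_cases h1 : zi' = ⟨ai, u, Mood.content⟩
    · have hu : zi'.util = u := by rw [h1]
      rw [show updProb ρ' ε zi zi' ai u = ε ^ (1-u) by simp [updProb, hk, h1], hu]
    · have h2 : zi' ≠ ⟨ai, u, Mood.discontent⟩ := by
        intro he; rw [he] at hmc; simp at hmc
      rw [show updProb ρ' ε zi zi' ai u = 0 by simp [updProb, hk, h1, h2]]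
      exact hp.le

/- helpers about actProb -/

lemma act_content_base {c ε : ℝ} {i : Fin n} {zi : AgentState (A i)} {ai : A i}
    (hm : zi.mood = Mood.content) (h : ai = zi.act) :
    actProb c ε zi ai = 1 - ε ^ c := by
  simp only [actProb]; rw [hm]; simp [h]

lemma act_content_other {c ε : ℝ} {i : Fin n} {zi : AgentState (A i)} {ai : A i}
    (hm : zi.mood = Mood.content) (h : ¬ ai = zi.act) :
    actProb c ε zi ai = ε ^ c / ((Fintype.card (A i) : ℝ) - 1) := by
  simp only [actProb]; rw [hm]; simp [h]

lemma act_disc {c ε : ℝ} {i : Fin n} {zi : AgentState (A i)} {ai : A i}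
    (hm : zi.mood = Mood.discontent) :
    actProb c ε zi ai = 1 / (Fintype.card (A i) : ℝ) := by
  simp only [actProb]; rw [hm]

lemma act_mem_Icc {c ε : ℝ} {i : Fin n} (zi : AgentState (A i)) (ai : A i)
    (hc0 : 0 < c) (hε : ε ∈ Set.Ioo (0:ℝ) 1) :
    actProb c ε zi ai ∈ Set.Icc (0:ℝ) 1 := by
  have hcard : 1 ≤ (Fintype.card (A i) : ℝ) := by
    exact_mod_cast Fintype.card_pos
  have hp : (0:ℝ) < ε ^ c := Real.rpow_pos_of_pos hε.1 _
  have hl : ε ^ c < 1 := Real.rpow_lt_one hε.1.le hε.2 hc0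
  cases hmm : zi.mood with
  | content =>
      by_cases h : ai = zi.act
      · rw [act_content_base hmm h]; constructor <;> linarith
      · rw [act_content_other hmm h]
        rcases eq_or_lt_of_le hcard with hq | hq
        · rw [← hq]; norm_num
        · have h2 : (1:ℝ) ≤ (Fintype.card (A i) : ℝ) - 1 := by
            have : (2:ℝ) ≤ (Fintype.card (A i) : ℝ) := by
              have : 2 ≤ Fintype.card (A i) := by exact_mod_cast hq
              exact_mod_cast this
            linarith
          constructor
          · positivity
          · rw [div_le_one (by linarith)]; linarith
  | discontent =>
      rw [act_disc hmm]
      constructor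
      · positivity
      · rw [div_le_one (by linarith)]; linarith

end GameAux

section GameMain
variable {n : ℕ} {A : Fin n → Type*} {W : Type*}
variable [∀ i, Fintype (A i)] [∀ i, Nonempty (A i)] [Fintype W] [Nonempty W]
variable (U : ∀ i : Fin n, (∀ j, A j) → W → ℝ) (Prw : W → ℝ) (c : ℝ)

/-- The summand of `P` for a fixed joint action and disturbance, as a function of `ε`. -/
noncomputable def pterm (x y : JState A) (a : ∀ j, A j) (w : W) (ε : ℝ) : ℝ :=
  (∏ i, actProb c ε (x i) (a i)) * Prw w *
    (∏ i, updProb (rho U) ε (x i) (y i) (a i) (U i a w))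

lemma P_eq (ε : ℝ) (x y : JState A) :
    P U Prw c ε x y = ∑ a : ∀ j, A j, ∑ w : W, pterm U Prw c x y a w ε := rfl

lemma fac_act_exists (hc0 : 0 < c) {i : Fin n} (zi : AgentState (A i)) (ai : A i) :
    ∃ e cl : ℝ, 0 ≤ e ∧ 0 ≤ cl ∧ Fac (fun ε => actProb c ε zi ai) e cl := by
  cases hm : zi.mood with
  | content =>
      by_cases h : ai = zi.act
      · exact ⟨0, 1, le_refl _, zero_le_one,
          fac_congr (fun ε _ => (act_content_base hm h).symm) (fac_one_sub_rpow hc0)⟩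
      · by_cases hcard : (Fintype.card (A i) : ℝ) - 1 = 0
        · refine ⟨0, 0, le_refl _, le_refl _,
            fac_congr (fun ε _ => ?_) (fac_zero_fun 0)⟩
          rw [act_content_other hm h, hcard, div_zero]
        · refine ⟨c + 0, 1 * ((Fintype.card (A i) : ℝ) - 1)⁻¹, by linarith, ?_, ?_⟩
          · have hcard1 : 1 ≤ (Fintype.card (A i) : ℝ) := by exact_mod_cast Fintype.card_pos
            have h3 : (0:ℝ) < (Fintype.card (A i) : ℝ) - 1 :=
              lt_of_le_of_ne (by linarith) (Ne.symm hcard)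
            rw [one_mul]
            positivity
          · refine fac_congr (fun ε hε => ?_)
              (fac_mul (fac_rpow c) (fac_const ((Fintype.card (A i) : ℝ) - 1)⁻¹))
            rw [act_content_other hm h, div_eq_mul_inv]
  | discontent =>
      refine ⟨0, 1 / (Fintype.card (A i) : ℝ), le_refl _, by positivity, ?_⟩
      exact fac_congr (fun ε _ => (act_disc hm).symm) (fac_const _)

lemma fac_upd_exists (ρ' : ℝ) {i : Fin n} (zi zi' : AgentState (A i)) (ai : A i) {u : ℝ}
    (hu : u < 1) :
    ∃ e cl : ℝ, 0 ≤ e ∧ 0 ≤ cl ∧ Fac (fun ε => updProb ρ' ε zi zi' ai u) e cl := by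
  by_cases hk : zi.mood = Mood.content ∧ ai = zi.act ∧ |u - zi.util| ≤ ρ'
  · by_cases he : zi' = zi
    · exact ⟨0, 1, le_refl _, zero_le_one,
        fac_congr (fun ε _ => by simp [updProb, hk, he]) (fac_const 1)⟩
    · exact ⟨0, 0, le_refl _, le_refl _,
        fac_congr (fun ε _ => by simp [updProb, hk, he]) (fac_const 0)⟩
  · by_cases h1 : zi' = ⟨ai, u, Mood.content⟩
    · exact ⟨1 - u, 1, by linarith, zero_le_one,
        fac_congr (fun ε _ => by simp [updProb, hk, h1]) (fac_rpow (1 - u))⟩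
    · by_cases h2 : zi' = ⟨ai, u, Mood.discontent⟩
      · exact ⟨0, 1, le_refl _, zero_le_one,
          fac_congr (fun ε _ => by simp [updProb, hk, h1, h2])
            (fac_one_sub_rpow (p := 1 - u) (by linarith))⟩
      · exact ⟨0, 0, le_refl _, le_refl _,
          fac_congr (fun ε _ => by simp [updProb, hk, h1, h2]) (fac_const 0)⟩

lemma fac_pterm (hc0 : 0 < c) (hU : ∀ (i : Fin n) (a : ∀ j, A j) (w : W), U i a w ∈ Set.Ico (0:ℝ) 1)
    (hPrw : ∀ w : W, 0 < Prw w)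
    (x y : JState A) (t : Fin n) (hx : (x t).mood = Mood.discontent)
    (hy : (y t).mood = Mood.content) (a : ∀ j, A j) (w : W) :
    ∃ cl : ℝ, 0 ≤ cl ∧ Fac (pterm U Prw c x y a w) (1 - (y t).util) cl := by
  by_cases hmatch : y t = ⟨a t, U t a w, Mood.content⟩
  · -- matching term
    have hut : (y t).util = U t a w := by rw [hmatch]
    choose eA clA heA hclA hfacA using fun i : Fin n => fac_act_exists c hc0 (x i) (a i)
    choose eU clU heU hclU hfacU using fun i : Fin n =>
      fac_upd_exists (rho U) (x i) (y i) (a i) (hU i a w).2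
    have hfacAprod : Fac (fun ε => ∏ i, actProb c ε (x i) (a i))
        (∑ i, eA i) (∏ i, clA i) := fac_prod _ (fun i _ => hfacA i)
    have hfacUprod : Fac (fun ε => ∏ i ∈ Finset.univ.erase t,
          updProb (rho U) ε (x i) (y i) (a i) (U i a w))
        (∑ i ∈ Finset.univ.erase t, eU i) (∏ i ∈ Finset.univ.erase t, clU i) :=
      fac_prod _ (fun i _ => hfacU i)
    have hfact : Fac (fun ε => updProb (rho U) ε (x t) (y t) (a t) (U t a w))
        (1 - U t a w) 1 :=
      fac_congr (fun ε _ => (upd_acc hx hmatch).symm) (fac_rpow _)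
    have hfacU2 : Fac (fun ε => ∏ i, updProb (rho U) ε (x i) (y i) (a i) (U i a w))
        ((1 - U t a w) + ∑ i ∈ Finset.univ.erase t, eU i)
        (1 * ∏ i ∈ Finset.univ.erase t, clU i) := by
      have hfe : (fun ε => ∏ i, updProb (rho U) ε (x i) (y i) (a i) (U i a w)) =
          fun ε => updProb (rho U) ε (x t) (y t) (a t) (U t a w) *
            ∏ i ∈ Finset.univ.erase t, updProb (rho U) ε (x i) (y i) (a i) (U i a w) := by
        funext ε
        exact (Finset.mul_prod_erase Finset.univ _ (Finset.mem_univ t)).symm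
      rw [hfe]
      exact fac_mul hfact hfacUprod
    have hfacterm : Fac (pterm U Prw c x y a w)
        ((∑ i, eA i) + 0 + ((1 - U t a w) + ∑ i ∈ Finset.univ.erase t, eU i))
        ((∏ i, clA i) * Prw w * (1 * ∏ i ∈ Finset.univ.erase t, clU i)) :=
      fac_mul (fac_mul hfacAprod (fac_const (Prw w))) hfacU2
    have hA0 : 0 ≤ ∑ i, eA i := Finset.sum_nonneg (fun i _ => heA i)
    have hU0 : 0 ≤ ∑ i ∈ Finset.univ.erase t, eU i :=
      Finset.sum_nonneg (fun i _ => heU i)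
    have hle : 1 - (y t).util ≤
        (∑ i, eA i) + 0 + ((1 - U t a w) + ∑ i ∈ Finset.univ.erase t, eU i) := by
      rw [hut]; linarith
    have hcl0 : 0 ≤ (∏ i, clA i) * Prw w * (1 * ∏ i ∈ Finset.univ.erase t, clU i) := by
      have := Finset.prod_nonneg (fun i (_ : i ∈ (Finset.univ : Finset (Fin n))) => hclA i)
      have := Finset.prod_nonneg (fun i (_ : i ∈ Finset.univ.erase t) => hclU i)
      have := (hPrw w).le
      positivity
    exact fac_le_raise hfacterm hcl0 hle
  · -- zero term
    refine ⟨0, le_refl _, fac_congr (fun ε hε => ?_) (fac_zero_fun _)⟩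
    have h0 : updProb (rho U) ε (x t) (y t) (a t) (U t a w) = 0 :=
      upd_zero_of hx hy hmatch
    have hz : (∏ i, updProb (rho U) ε (x i) (y i) (a i) (U i a w)) = 0 :=
      Finset.prod_eq_zero (Finset.mem_univ t) h0
    rw [pterm, hz, mul_zero]

lemma transres_edge (hc0 : 0 < c)
    (hU : ∀ (i : Fin n) (a : ∀ j, A j) (w : W), U i a w ∈ Set.Ico (0:ℝ) 1)
    (hPrw : ∀ w : W, 0 < Prw w)
    (x y : JState A) (t : Fin n) (astar : ∀ j, A j) (wstar : W)
    (H1 : ∀ i, (x i).mood = Mood.content →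
        (x i).act = astar i ∧ y i = x i ∧ |U i astar wstar - (x i).util| ≤ rho U)
    (H2 : (x t).mood = Mood.discontent)
    (H3 : y t = ⟨astar t, U t astar wstar, Mood.content⟩)
    (H4 : ∀ i, i ≠ t → (x i).mood = Mood.discontent →
        y i = ⟨astar i, U i astar wstar, Mood.discontent⟩) :
    TransRes U Prw c x y (1 - U t astar wstar) := by
  have hyt : (y t).mood = Mood.content := by rw [H3]
  have hytu : (y t).util = U t astar wstar := by rw [H3]
  set r : ℝ := 1 - U t astar wstar with hr
  have hrr : r = 1 - (y t).util := by rw [hytu]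
  -- generic limits for every term
  choose cl hcl hfac using fun (a : ∀ j, A j) (w : W) =>
    fac_pterm U Prw c hc0 hU hPrw x y t H2 hyt a w
  rw [← hrr] at hfac
  -- the designated term has a positive limit
  have hdes : Fac (pterm U Prw c x y astar wstar) r
      ((∏ i, (if (x i).mood = Mood.content then 1 else 1 / (Fintype.card (A i) : ℝ))) *
        Prw wstar * (∏ i : Fin n, (1:ℝ))) := by
    have hfacA : Fac (fun ε => ∏ i, actProb c ε (x i) (astar i))
        (∑ i : Fin n, (0:ℝ))
        (∏ i, (if (x i).mood = Mood.content then 1 else 1 / (Fintype.card (A i) : ℝ))) := by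
      refine fac_prod _ (fun i _ => ?_)
      cases hm : (x i).mood with
      | content =>
          rw [if_pos rfl]
          exact fac_congr (fun ε _ => (act_content_base hm (H1 i hm).1.symm).symm)
            (fac_one_sub_rpow hc0)
      | discontent =>
          rw [if_neg (by simp)]
          exact fac_congr (fun ε _ => (act_disc hm).symm) (fac_const _)
    have hfacU : Fac (fun ε => ∏ i, updProb (rho U) ε (x i) (y i) (astar i) (U i astar wstar))
        (∑ i : Fin n, (if i = t then r else 0)) (∏ i : Fin n, (1:ℝ)) := by
      refine fac_prod _ (fun i _ => ?_)
      by_cases hit : i = t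
      · subst hit
        rw [if_pos rfl]
        exact fac_congr (fun ε _ => (upd_acc H2 H3).symm) (fac_rpow r)
      · rw [if_neg hit]
        cases hm : (x i).mood with
        | content =>
            refine fac_congr (fun ε _ => ?_) (fac_const 1)
            exact (upd_keep hm (H1 i hm).1.symm (H1 i hm).2.2 (H1 i hm).2.1).symm
        | discontent =>
            refine fac_congr (fun ε _ => ?_)
              (fac_one_sub_rpow (p := 1 - U i astar wstar) (by have := (hU i astar wstar).2; linarith))
            exact (upd_rej hm (H4 i hit hm)).symm
    have := fac_mul (fac_mul hfacA (fac_const (Prw wstar))) hfacU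
    have hE : (∑ i : Fin n, (0:ℝ)) + 0 + (∑ i : Fin n, (if i = t then r else 0)) = r := by
      rw [Finset.sum_const_zero, Finset.sum_ite_eq' Finset.univ t (fun _ => r)]
      simp
    rw [hE] at this
    exact this
  have hclpos : 0 < cl astar wstar := by
    have := fac_unique (hfac astar wstar) hdes
    rw [this]
    have h1 : (0:ℝ) < ∏ i, (if (x i).mood = Mood.content then 1 else 1 / (Fintype.card (A i) : ℝ)) := by
      refine Finset.prod_pos (fun i _ => ?_)
      split
      · norm_num
      · have : (0:ℝ) < (Fintype.card (A i) : ℝ) := by exact_mod_cast Fintype.card_pos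
        positivity
    have h2 := hPrw wstar
    have h3 : (0:ℝ) < ∏ i : Fin n, (1:ℝ) := by simp
    positivity
  -- sum up
  have hfacP : Fac (fun ε => P U Prw c ε x y) r (∑ a : ∀ j, A j, ∑ w : W, cl a w) := by
    have h1 : ∀ a : ∀ j, A j, Fac (fun ε => ∑ w : W, pterm U Prw c x y a w ε) r
        (∑ w : W, cl a w) := fun a => fac_sum _ (fun w _ => hfac a w)
    have h2 : Fac (fun ε => ∑ a : ∀ j, A j, ∑ w : W, pterm U Prw c x y a w ε) r
        (∑ a : ∀ j, A j, ∑ w : W, cl a w) := fac_sum _ (fun a _ => h1 a)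
    exact h2
  refine ⟨∑ a : ∀ j, A j, ∑ w : W, cl a w, ?_, hfacP⟩
  calc (0:ℝ) < cl astar wstar := hclpos
    _ ≤ ∑ w : W, cl astar w :=
        Finset.single_le_sum (fun w _ => hcl astar w) (Finset.mem_univ wstar)
    _ ≤ ∑ a : ∀ j, A j, ∑ w : W, cl a w :=
        Finset.single_le_sum (fun a (_ : a ∈ Finset.univ) => Finset.sum_nonneg (fun w _ => hcl a w))
          (Finset.mem_univ astar)

lemma transres_changed (hU : ∀ (i : Fin n) (a : ∀ j, A j) (w : W), U i a w ∈ Set.Ico (0:ℝ) 1)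
    {x y : JState A} {r : ℝ} (h : TransRes U Prw c x y r) {i : Fin n} (hne : x i ≠ y i) :
    (y i).util ∈ Set.Ico (0:ℝ) 1 := by
  obtain ⟨L, hL, ht⟩ := h
  have hev : ∀ᶠ ε in 𝓝[>] (0:ℝ), 0 < P U Prw c ε x y / ε ^ r :=
    ht.eventually (eventually_gt_nhds hL)
  have hev2 : ∀ᶠ ε in 𝓝[>] (0:ℝ), ε ∈ Set.Ioo (0:ℝ) 1 := by
    filter_upwards [mem_nhdsGT_Ioo] with ε hε; exact hε
  obtain ⟨ε, hd, hε⟩ := (hev.and hev2).exists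
  have hP : 0 < P U Prw c ε x y := by
    have h2 : (0:ℝ) < ε ^ r := Real.rpow_pos_of_pos hε.1 r
    have := mul_pos hd h2
    rwa [div_mul_cancel₀ _ (ne_of_gt h2)] at this
  rw [P_eq] at hP
  have ha : ∃ a : ∀ j, A j, 0 < ∑ w : W, pterm U Prw c x y a w ε := by
    by_contra hcon
    push_neg at hcon
    exact absurd hP (not_lt.mpr (Finset.sum_nonpos (fun a _ => hcon a)))
  obtain ⟨a, haa⟩ := ha
  have hw : ∃ w : W, 0 < pterm U Prw c x y a w ε := by
    by_contra hcon
    push_neg at hcon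
    exact absurd haa (not_lt.mpr (Finset.sum_nonpos (fun w _ => hcon w)))
  obtain ⟨w, hww⟩ := hw
  rw [pterm] at hww
  have hU0 : (∏ j, updProb (rho U) ε (x j) (y j) (a j) (U j a w)) ≠ 0 := by
    intro h0; rw [h0, mul_zero] at hww; exact lt_irrefl _ hww
  have hfne : updProb (rho U) ε (x i) (y i) (a i) (U i a w) ≠ 0 :=
    fun h0 => hU0 (Finset.prod_eq_zero (Finset.mem_univ i) h0)
  rw [upd_ne_zero_util hfne (Ne.symm hne)]
  exact hU i a w

lemma transres_ge (hc0 : 0 < c)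
    (hU : ∀ (i : Fin n) (a : ∀ j, A j) (w : W), U i a w ∈ Set.Ico (0:ℝ) 1)
    (hPrw : ∀ w : W, 0 < Prw w) (hPrw1 : (∑ w : W, Prw w) = 1)
    {x y : JState A} {r : ℝ} (h : TransRes U Prw c x y r) :
    ∑ i ∈ Finset.univ.filter (fun i => x i ≠ y i ∧ (y i).mood = Mood.content),
      (1 - (y i).util) ≤ r := by
  classical
  set S : Finset (Fin n) :=
    Finset.univ.filter (fun i => x i ≠ y i ∧ (y i).mood = Mood.content) with hS
  set b : ℝ := ∑ i ∈ S, (1 - (y i).util) with hb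
  by_contra hcon
  push_neg at hcon
  obtain ⟨L, hL, ht⟩ := h
  set N : ℝ := (Fintype.card (∀ j, A j) : ℝ) * (Fintype.card W : ℝ) with hN
  have hbound : ∀ ε ∈ Set.Ioo (0:ℝ) 1, P U Prw c ε x y ≤ N * ε ^ b := by
    intro ε hε
    have hterm : ∀ (a : ∀ j, A j) (w : W), pterm U Prw c x y a w ε ≤ ε ^ b := by
      intro a w
      rw [pterm]
      have hA0 : (0:ℝ) ≤ ∏ i, actProb c ε (x i) (a i) :=
        Finset.prod_nonneg fun i _ => (act_mem_Icc _ _ hc0 hε).1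
      have hA1 : (∏ i, actProb c ε (x i) (a i)) ≤ 1 :=
        Finset.prod_le_one (fun i _ => (act_mem_Icc _ _ hc0 hε).1)
          (fun i _ => (act_mem_Icc _ _ hc0 hε).2)
      have hw1 : Prw w ≤ 1 := by
        rw [← hPrw1]
        exact Finset.single_le_sum (fun w' _ => (hPrw w').le) (Finset.mem_univ w)
      have hU01 : ∀ i, updProb (rho U) ε (x i) (y i) (a i) (U i a w) ∈ Set.Icc (0:ℝ) 1 :=
        fun i => upd_mem_Icc hε (hU i a w).2
      have hsplit : (∏ i, updProb (rho U) ε (x i) (y i) (a i) (U i a w)) =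
          (∏ i ∈ S, updProb (rho U) ε (x i) (y i) (a i) (U i a w)) *
          (∏ i ∈ Finset.univ.filter
              (fun i => ¬(x i ≠ y i ∧ (y i).mood = Mood.content)),
            updProb (rho U) ε (x i) (y i) (a i) (U i a w)) := by
        rw [hS]
        exact (Finset.prod_filter_mul_prod_filter_not Finset.univ _ _).symm
      have h1 : (∏ i ∈ S, updProb (rho U) ε (x i) (y i) (a i) (U i a w)) ≤
          ∏ i ∈ S, ε ^ (1 - (y i).util) := by
        refine Finset.prod_le_prod (fun i _ => (hU01 i).1) (fun i hi => ?_)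
        rw [hS, Finset.mem_filter] at hi
        exact upd_le_content hε.1 (Ne.symm hi.2.1) hi.2.2
      have h2 : (∏ i ∈ S, ε ^ (1 - (y i).util)) = ε ^ b := by
        rw [hb]
        exact (Real.rpow_sum_of_pos hε.1 _ _).symm
      have h3 : (∏ i ∈ Finset.univ.filter
            (fun i => ¬(x i ≠ y i ∧ (y i).mood = Mood.content)),
          updProb (rho U) ε (x i) (y i) (a i) (U i a w)) ≤ 1 :=
        Finset.prod_le_one (fun i _ => (hU01 i).1) (fun i _ => (hU01 i).2)
      have h30 : (0:ℝ) ≤ ∏ i ∈ Finset.univ.filter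
            (fun i => ¬(x i ≠ y i ∧ (y i).mood = Mood.content)),
          updProb (rho U) ε (x i) (y i) (a i) (U i a w) :=
        Finset.prod_nonneg (fun i _ => (hU01 i).1)
      have hpU : (∏ i, updProb (rho U) ε (x i) (y i) (a i) (U i a w)) ≤ ε ^ b := by
        rw [hsplit]
        calc (∏ i ∈ S, updProb (rho U) ε (x i) (y i) (a i) (U i a w)) *
              (∏ i ∈ Finset.univ.filter
                  (fun i => ¬(x i ≠ y i ∧ (y i).mood = Mood.content)),
                updProb (rho U) ε (x i) (y i) (a i) (U i a w))
            ≤ (ε ^ b) * 1 := by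
              refine mul_le_mul (h1.trans h2.le) h3 h30 ?_
              exact (Real.rpow_pos_of_pos hε.1 b).le
          _ = ε ^ b := mul_one _
      have hpU0 : (0:ℝ) ≤ ∏ i, updProb (rho U) ε (x i) (y i) (a i) (U i a w) :=
        Finset.prod_nonneg (fun i _ => (hU01 i).1)
      have h4 : (∏ i, actProb c ε (x i) (a i)) * Prw w ≤ 1 :=
        mul_le_one₀ hA1 (hPrw w).le hw1
      have h5 : (∏ i, actProb c ε (x i) (a i)) * Prw w *
          (∏ i, updProb (rho U) ε (x i) (y i) (a i) (U i a w)) ≤ 1 * (ε ^ b) :=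
        mul_le_mul h4 hpU hpU0 zero_le_one
      rwa [one_mul] at h5
    rw [P_eq]
    calc (∑ a : ∀ j, A j, ∑ w : W, pterm U Prw c x y a w ε)
        ≤ ∑ _a : ∀ j, A j, ∑ _w : W, ε ^ b :=
          Finset.sum_le_sum (fun a _ => Finset.sum_le_sum (fun w _ => hterm a w))
      _ = N * ε ^ b := by
          simp [Finset.sum_const, nsmul_eq_mul, hN]
          ring
  have hev : ∀ᶠ ε in 𝓝[>] (0:ℝ),
      P U Prw c ε x y / ε ^ r ≤ N * ε ^ (b - r) := by
    filter_upwards [mem_nhdsGT_Ioo] with ε hε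
    have h2 : (0:ℝ) < ε ^ r := Real.rpow_pos_of_pos hε.1 r
    rw [div_le_iff₀ h2]
    calc P U Prw c ε x y ≤ N * ε ^ b := hbound ε hε
      _ = N * ε ^ (b - r) * ε ^ r := by
          have hb2 : ε ^ b = ε ^ (b - r) * ε ^ r := by
            rw [← Real.rpow_add hε.1, sub_add_cancel]
          rw [hb2, ← mul_assoc]
  have htend : Tendsto (fun ε : ℝ => N * ε ^ (b - r)) (𝓝[>] (0:ℝ)) (𝓝 0) := by
    have := (tendsto_const_nhds (x := N) (f := 𝓝[>] (0:ℝ))).mul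
      (tendsto_rpow_zero (sub_pos.mpr hcon))
    simpa using this
  have hfinal : L ≤ 0 := le_of_tendsto_of_tendsto ht htend hev
  linarith

lemma pathres_changed
    (hU : ∀ (i : Fin n) (a : ∀ j, A j) (w : W), U i a w ∈ Set.Ico (0:ℝ) 1)
    {x y : JState A} {rr : ℝ} (hp : PathRes (TransRes U Prw c) x y rr) :
    ∀ i, x i ≠ y i → (y i).util ∈ Set.Ico (0:ℝ) 1 := by
  induction hp with
  | single h => exact fun i hi => transres_changed U Prw c hU h hi
  | @cons x' y' z' r s h _ ih =>
      intro i hi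
      by_cases hm : y' i = z' i
      · rw [← hm]
        refine transres_changed U Prw c hU h ?_
        intro he; rw [he] at hi; exact hi hm
      · exact ih i hm

lemma pathres_ge (hc0 : 0 < c)
    (hU : ∀ (i : Fin n) (a : ∀ j, A j) (w : W), U i a w ∈ Set.Ico (0:ℝ) 1)
    (hPrw : ∀ w : W, 0 < Prw w) (hPrw1 : (∑ w : W, Prw w) = 1)
    {x y : JState A} {rr : ℝ} (hp : PathRes (TransRes U Prw c) x y rr) :
    ∑ i ∈ Finset.univ.filter (fun i => x i ≠ y i ∧ (y i).mood = Mood.content),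
      (1 - (y i).util) ≤ rr := by
  induction hp with
  | single h => exact transres_ge U Prw c hc0 hU hPrw hPrw1 h
  | @cons x' m z' r s h hp2 ih =>
      have h1 := transres_ge U Prw c hc0 hU hPrw hPrw1 h
      have hxm : ∀ i, x' i ≠ m i → (m i).util ∈ Set.Ico (0:ℝ) 1 :=
        fun i hi => transres_changed U Prw c hU h hi
      have hmz : ∀ i, m i ≠ z' i → (z' i).util ∈ Set.Ico (0:ℝ) 1 :=
        pathres_changed U Prw c hU hp2
      set T : Finset (Fin n) :=
        Finset.univ.filter (fun i => x' i ≠ z' i ∧ (z' i).mood = Mood.content) with hT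
      have hsplit : (∑ i ∈ T, (1 - (z' i).util)) =
          (∑ i ∈ T.filter (fun i => m i = z' i), (1 - (z' i).util)) +
          (∑ i ∈ T.filter (fun i => ¬ m i = z' i), (1 - (z' i).util)) :=
        (Finset.sum_filter_add_sum_filter_not T _ _).symm
      have e1 : (∑ i ∈ T.filter (fun i => m i = z' i), (1 - (z' i).util)) =
          ∑ i ∈ T.filter (fun i => m i = z' i), (1 - (m i).util) :=
        Finset.sum_congr rfl (fun i hi => by
          rw [(Finset.mem_filter.mp hi).2])
      have hsub1 : T.filter (fun i => m i = z' i) ⊆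
          Finset.univ.filter (fun i => x' i ≠ m i ∧ (m i).mood = Mood.content) := by
        intro i hi
        rw [Finset.mem_filter] at hi
        obtain ⟨hiT, hmz'⟩ := hi
        rw [hT, Finset.mem_filter] at hiT
        rw [Finset.mem_filter]
        refine ⟨Finset.mem_univ i, ?_, ?_⟩
        · rw [hmz']; exact hiT.2.1
        · rw [hmz']; exact hiT.2.2
      have le1 : (∑ i ∈ T.filter (fun i => m i = z' i), (1 - (m i).util)) ≤
          ∑ i ∈ Finset.univ.filter (fun i => x' i ≠ m i ∧ (m i).mood = Mood.content),
            (1 - (m i).util) := by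
        refine Finset.sum_le_sum_of_subset_of_nonneg hsub1 (fun i hi _ => ?_)
        rw [Finset.mem_filter] at hi
        have := (hxm i hi.2.1).2
        linarith
      have hsub2 : T.filter (fun i => ¬ m i = z' i) ⊆
          Finset.univ.filter (fun i => m i ≠ z' i ∧ (z' i).mood = Mood.content) := by
        intro i hi
        rw [Finset.mem_filter] at hi
        obtain ⟨hiT, hne⟩ := hi
        rw [hT, Finset.mem_filter] at hiT
        rw [Finset.mem_filter]
        exact ⟨Finset.mem_univ i, hne, hiT.2.2⟩
      have le2 : (∑ i ∈ T.filter (fun i => ¬ m i = z' i), (1 - (z' i).util)) ≤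
          ∑ i ∈ Finset.univ.filter (fun i => m i ≠ z' i ∧ (z' i).mood = Mood.content),
            (1 - (z' i).util) := by
        refine Finset.sum_le_sum_of_subset_of_nonneg hsub2 (fun i hi _ => ?_)
        rw [Finset.mem_filter] at hi
        have := (hmz i hi.2.1).2
        linarith
      calc (∑ i ∈ T, (1 - (z' i).util)) =
            (∑ i ∈ T.filter (fun i => m i = z' i), (1 - (z' i).util)) +
            (∑ i ∈ T.filter (fun i => ¬ m i = z' i), (1 - (z' i).util)) := hsplit
        _ ≤ r + s := by
            rw [e1]
            exact add_le_add (le1.trans h1) (le2.trans ih)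

/-- The explicit path of joint states from the all-discontent state to `z0`. -/
noncomputable def pathX (d z0 : JState A) (ws' : ℕ → W) (t : ℕ) : JState A :=
  fun i => if (i : ℕ) < t then z0 i
    else if t = 0 then d i
    else ⟨(z0 i).act, U i (prof z0) (ws' (t-1)), Mood.discontent⟩

end GameMain
end Paper

namespace Paper

/-- Table I, row 1: the resistance from the recurrence class `D` to a
singleton recurrence class `{z⁰}` with `z⁰ ∈ C^0` is `Σ_{i∈N} (1 − ū_i(z⁰))`. -/
theorem resistance_D_to_C0 {n : ℕ} {A : Fin n → Type*} {W : Type*}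
    [∀ i, Fintype (A i)] [∀ i, Nonempty (A i)] [Fintype W] [Nonempty W]
    (U : ∀ i : Fin n, (∀ j, A j) → W → ℝ) (Prw : W → ℝ) (c : ℝ)
    (hn : 0 < n)
    (hU : ∀ (i : Fin n) (a : ∀ j, A j) (w : W), U i a w ∈ Set.Ico (0:ℝ) 1)
    (hPrw : ∀ w : W, 0 < Prw w) (hPrw1 : (∑ w : W, Prw w) = 1)
    (hc : (n : ℝ) < c)
    (hInter : Interdependent U) :
    ∀ z0 ∈ Cm U Prw c 0,
      ClassResIs (TransRes U Prw c) (Dset U Prw c) {z0}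
        (∑ i, (1 - (z0 i).util)) := by
  intro z0 hz0
  have hc0 : 0 < c := lt_of_le_of_lt (by exact_mod_cast Nat.zero_le n) hc
  simp only [Cm, Set.mem_setOf_eq] at hz0
  obtain ⟨hzS, hzC, hzB⟩ := hz0
  simp only [Bset, Set.mem_setOf_eq] at hzB
  choose ws hws using fun i : Fin n => (hzB i).2.1
  have hB2 : ∀ (i : Fin n) (w' : W), |(z0 i).util - U i (prof z0) w'| ≤ rho U :=
    fun i => (hzB i).2.2
  -- the all-discontent state
  set a0 : ∀ j, A j := fun j => Classical.arbitrary (A j) with ha0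
  set w0 : W := Classical.arbitrary W with hw0
  set d0 : JState A := fun i => ⟨a0 i, U i a0 w0, Mood.discontent⟩ with hd0
  have hd0disc : allDiscontent d0 := fun i => rfl
  have hstep : stepPos U Prw c d0 d0 := by
    refine ⟨1/2, Set.mem_Ioo.mpr (by norm_num), ?_⟩
    rw [P_eq]
    have hterm : ∀ (a : ∀ j, A j) (w : W), 0 ≤ pterm U Prw c d0 d0 a w (1/2) := by
      intro a w
      rw [pterm]
      have h1 : (0:ℝ) ≤ ∏ i, actProb c (1/2) (d0 i) (a i) :=
        Finset.prod_nonneg fun i _ =>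
          (act_mem_Icc _ _ hc0 (Set.mem_Ioo.mpr (by norm_num))).1
      have h2 : (0:ℝ) ≤ ∏ i, updProb (rho U) (1/2) (d0 i) (d0 i) (a i) (U i a w) :=
        Finset.prod_nonneg fun i _ =>
          (upd_mem_Icc (Set.mem_Ioo.mpr (by norm_num)) (hU i a w).2).1
      have h3 := (hPrw w).le
      positivity
    have hpos : 0 < pterm U Prw c d0 d0 a0 w0 (1/2) := by
      rw [pterm]
      have h1 : (0:ℝ) < ∏ i, actProb c (1/2) (d0 i) (a0 i) := by
        refine Finset.prod_pos fun i _ => ?_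
        rw [act_disc rfl]
        have : (0:ℝ) < (Fintype.card (A i) : ℝ) := by exact_mod_cast Fintype.card_pos
        positivity
      have h2 : (0:ℝ) < ∏ i, updProb (rho U) (1/2) (d0 i) (d0 i) (a0 i) (U i a0 w0) := by
        refine Finset.prod_pos fun i _ => ?_
        rw [upd_rej rfl rfl]
        have hu2 := (hU i a0 w0).2
        have : ((1:ℝ)/2) ^ (1 - U i a0 w0) < 1 :=
          Real.rpow_lt_one (by norm_num) (by norm_num) (by linarith)
        linarith
      exact mul_pos (mul_pos h1 (hPrw w0)) h2
    exact Finset.sum_pos' (fun a _ => Finset.sum_nonneg fun w _ => hterm a w)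
      ⟨a0, Finset.mem_univ a0,
        Finset.sum_pos' (fun w _ => hterm a0 w) ⟨w0, Finset.mem_univ w0, hpos⟩⟩
  have hd0mem : d0 ∈ Dset U Prw c := by
    refine ⟨⟨d0, ?_, hd0disc, Relation.TransGen.single hstep⟩, hd0disc⟩
    intro i; exact ⟨a0, w0, rfl⟩
  -- the path
  set ws' : ℕ → W := fun k => if h : k < n then ws ⟨k, h⟩ else w0 with hws'
  have hedge : ∀ t : Fin n,
      TransRes U Prw c (pathX U d0 z0 ws' t.val) (pathX U d0 z0 ws' (t.val + 1))
        (1 - (z0 t).util) := by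
    intro t
    have hws2 : ws' t.val = ws t := by
      simp only [hws']
      rw [dif_pos t.isLt]
    have hx_eq : ∀ i : Fin n, (i : ℕ) < t.val → pathX U d0 z0 ws' t.val i = z0 i := by
      intro i hi; simp [pathX, hi]
    have hx_mood : ∀ i : Fin n, t.val ≤ (i : ℕ) →
        (pathX U d0 z0 ws' t.val i).mood = Mood.discontent := by
      intro i hi
      simp only [pathX]
      rw [if_neg (by omega)]
      by_cases h0 : t.val = 0
      · rw [if_pos h0]
      · rw [if_neg h0]
    have key := transres_edge U Prw c hc0 hU hPrw
      (pathX U d0 z0 ws' t.val) (pathX U d0 z0 ws' (t.val + 1)) t (prof z0) (ws t)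
      ?_ ?_ ?_ ?_
    · rw [← hws t] at key
      exact key
    · -- H1
      intro i hm
      have hi : (i : ℕ) < t.val := by
        by_contra hcon
        rw [hx_mood i (by omega)] at hm
        simp at hm
      refine ⟨?_, ?_, ?_⟩
      · rw [hx_eq i hi]; rfl
      · have hy : pathX U d0 z0 ws' (t.val + 1) i = z0 i := by
          simp [pathX, show (i:ℕ) < t.val + 1 by omega]
        rw [hy, hx_eq i hi]
      · rw [hx_eq i hi, abs_sub_comm]
        exact hB2 i (ws t)
    · -- H2
      exact hx_mood t (le_refl _)
    · -- H3
      have hy : pathX U d0 z0 ws' (t.val + 1) t = z0 t := by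
        simp [pathX]
      rw [hy, ← hws t, ← hzC t]
      rfl
    · -- H4
      intro i hit hm
      have hi : ¬ (i : ℕ) < t.val := by
        intro hcon
        rw [hx_eq i hcon, hzC i] at hm
        simp at hm
      have hi2 : t.val + 1 ≤ (i : ℕ) := by
        have := Fin.val_ne_of_ne hit
        omega
      simp only [pathX]
      rw [if_neg (by omega), if_neg (by omega)]
      simp only [Nat.add_sub_cancel]
      rw [hws2]
      rfl
  have hXn : pathX U d0 z0 ws' n = z0 := by
    funext i; simp [pathX, i.isLt]
  have key : ∀ m : ℕ, ∀ t : Fin n, n = t.val + (m + 1) →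
      PathRes (TransRes U Prw c) (pathX U d0 z0 ws' t.val) z0
        (∑ i ∈ Finset.univ.filter (fun i : Fin n => t.val ≤ (i : ℕ)),
          (1 - (z0 i).util)) := by
    intro m
    induction m with
    | zero =>
        intro t ht
        have hfe : Finset.univ.filter (fun i : Fin n => t.val ≤ (i : ℕ)) = {t} := by
          ext i
          simp only [Finset.mem_filter, Finset.mem_univ, true_and, Finset.mem_singleton,
            Fin.ext_iff]
          omega
        rw [hfe, Finset.sum_singleton]
        have hthis := hedge t
        rw [show t.val + 1 = n from by omega, hXn] at hthis
        exact PathRes.single hthis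
    | succ m ih =>
        intro t ht
        have htn : t.val + 1 < n := by omega
        have ih2 := ih ⟨t.val + 1, htn⟩ (by simp only [Fin.val_mk]; omega)
        have hfe : Finset.univ.filter (fun i : Fin n => t.val ≤ (i : ℕ)) =
            insert t (Finset.univ.filter (fun i : Fin n => t.val + 1 ≤ (i : ℕ))) := by
          ext i
          simp only [Finset.mem_filter, Finset.mem_univ, true_and, Finset.mem_insert,
            Fin.ext_iff]
          omega
        rw [hfe, Finset.sum_insert (by simp)]
        exact PathRes.cons (hedge t) ih2
  have hpath : PathRes (TransRes U Prw c) d0 z0 (∑ i, (1 - (z0 i).util)) := by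
    have h0n : n = (⟨0, hn⟩ : Fin n).val + ((n - 1) + 1) := by
      simp only [Fin.val_mk]; omega
    have hthis := key (n - 1) ⟨0, hn⟩ h0n
    have hX0 : pathX U d0 z0 ws' (⟨0, hn⟩ : Fin n).val = d0 := by
      funext i; simp [pathX]
    have hfu : Finset.univ.filter
        (fun i : Fin n => ((⟨0, hn⟩ : Fin n).val : ℕ) ≤ (i : ℕ)) = Finset.univ := by
      ext i; simp
    rw [hX0, hfu] at hthis
    exact hthis
  constructor
  · exact ⟨d0, hd0mem, z0, rfl, hpath⟩
  · intro x hx y hy r' hp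
    rw [Set.mem_singleton_iff] at hy
    rw [hy] at hp
    clear hy
    have hall : Finset.univ.filter
        (fun i : Fin n => x i ≠ z0 i ∧ (z0 i).mood = Mood.content) = Finset.univ := by
      ext i
      simp only [Finset.mem_filter, Finset.mem_univ, true_and, iff_true]
      refine ⟨?_, hzC i⟩
      intro he
      have hmm := hx.2 i
      rw [he, hzC i] at hmm
      simp at hmm
    have hge := pathres_ge U Prw c hc0 hU hPrw hPrw1 hp
    rw [hall] at hge
    exact hge

end Paper
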